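/- Let H ⊆ {2,3,...} and define M(H) as the supremum of λ over all nonnegative trigonometric polynomials φ(t) = 1 + λ cos(2πt) + ∑_{k∈H} c_k cos(2πkt) (finite sums, k ∈ H). Then M(H) · M({2,3,...} \ H) = 2. -/

import Mathlib

open Real

/-- `turanM H` is the supremum of `λ` over all nonnegative trigonometric polynomials
`φ(t) = 1 + λ cos(2πt) + ∑_{k ∈ S} c_k cos(2πkt)` with `S` a finite subset of `H`. -/
noncomputable def turanM (H : Set ℕ) : ℝ :=
  sSup {lam : ℝ | ∃ S : Finset ℕ, ↑S ⊆ H ∧ ∃ c : ℕ → ℝ,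
    ∀ t : ℝ, 0 ≤ 1 + lam * Real.cos (2 * π * t) +
      ∑ k ∈ S, c k * Real.cos (2 * π * k * t)}

open Finset


lemma sin_two_pi_int (n : ℤ) : Real.sin (2*π*n) = 0 := by
  have := Real.sin_int_mul_pi (2*n)
  push_cast at this
  convert this using 2
  ring

lemma int_cos_r {r : ℝ} (hr : r ≠ 0) (hs : Real.sin (2*π*r) = 0) :
    ∫ t in (0:ℝ)..1, Real.cos (2*π*r*t) = 0 := by
  have hc : (2*π*r) ≠ 0 := by
    have : π ≠ 0 := Real.pi_ne_zero
    positivity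
  have h1 : ∀ t : ℝ, Real.cos (2*π*r*t) = Real.cos ((2*π*r)*t) := by
    intro t; ring_nf
  rw [show (fun t => Real.cos (2*π*r*t)) = (fun t => Real.cos ((2*π*r)*t)) from rfl]
  rw [intervalIntegral.integral_comp_mul_left Real.cos hc]
  simp [hs]

lemma int_cos_nat {n : ℕ} (hn : n ≠ 0) :
    ∫ t in (0:ℝ)..1, Real.cos (2*π*n*t) = 0 := by
  have := int_cos_r (r := (n:ℝ)) (by exact_mod_cast hn) (by
    have := sin_two_pi_int (n:ℤ); push_cast at this ⊢; exact this)
  exact this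

lemma cos_mul_cos' (a b : ℝ) :
    Real.cos a * Real.cos b = (Real.cos (a+b) + Real.cos (a-b))/2 := by
  rw [Real.cos_add, Real.cos_sub]; ring

lemma integrable_cc (k m : ℕ) :
    IntervalIntegrable (fun t => Real.cos (2*π*k*t) * Real.cos (2*π*m*t))
      MeasureTheory.volume 0 1 := by
  apply Continuous.intervalIntegrable; fun_prop

lemma int_cos_mul_cos {k m : ℕ} (hkm : k ≠ m) :
    ∫ t in (0:ℝ)..1, Real.cos (2*π*k*t) * Real.cos (2*π*m*t) = 0 := by
  have h1 : ∀ t : ℝ, Real.cos (2*π*k*t) * Real.cos (2*π*m*t)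
      = (Real.cos (2*π*((k:ℝ)+m)*t) + Real.cos (2*π*((k:ℝ)-m)*t))/2 := by
    intro t
    rw [cos_mul_cos']
    congr 2 <;> ring_nf
  rw [show (fun t => Real.cos (2*π*k*t) * Real.cos (2*π*m*t)) = (fun t =>
    (Real.cos (2*π*((k:ℝ)+m)*t) + Real.cos (2*π*((k:ℝ)-m)*t))/2) from funext h1]
  have hplus : ∫ t in (0:ℝ)..1, Real.cos (2*π*((k:ℝ)+m)*t) = 0 := by
    rcases Nat.eq_zero_or_pos (k+m) with h | h
    · exact absurd (by omega : k = m) hkm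
    · have := int_cos_nat (n := k+m) (by omega)
      push_cast at this ⊢; convert this using 3 <;> ring_nf
  have hminus : ∫ t in (0:ℝ)..1, Real.cos (2*π*((k:ℝ)-m)*t) = 0 := by
    apply int_cos_r
    · intro h
      apply hkm
      have : (k:ℝ) = m := by linarith [sub_eq_zero.mp h]
      exact_mod_cast this
    · have := sin_two_pi_int ((k:ℤ)-m); push_cast at this ⊢; exact this
  rw [intervalIntegral.integral_div, intervalIntegral.integral_add, hplus, hminus]
  · norm_num
  · apply Continuous.intervalIntegrable; fun_prop
  · apply Continuous.intervalIntegrable; fun_prop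

lemma int_cos_sq {k : ℕ} (hk : k ≠ 0) :
    ∫ t in (0:ℝ)..1, Real.cos (2*π*k*t) * Real.cos (2*π*k*t) = 1/2 := by
  have h1 : ∀ t : ℝ, Real.cos (2*π*k*t) * Real.cos (2*π*k*t)
      = (Real.cos (2*π*((k:ℝ)+k)*t) + 1)/2 := by
    intro t
    rw [cos_mul_cos']
    have : 2*π*(k:ℝ)*t - 2*π*k*t = 0 := by ring
    rw [this, Real.cos_zero]
    congr 3; ring
  rw [show (fun t => Real.cos (2*π*k*t) * Real.cos (2*π*k*t)) = (fun t =>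
    (Real.cos (2*π*((k:ℝ)+k)*t) + 1)/2) from funext h1]
  have hplus : ∫ t in (0:ℝ)..1, Real.cos (2*π*((k:ℝ)+k)*t) = 0 := by
    have := int_cos_nat (n := k+k) (by omega)
    push_cast at this ⊢; convert this using 3 <;> ring_nf
  rw [intervalIntegral.integral_div, intervalIntegral.integral_add, hplus]
  · norm_num
  · apply Continuous.intervalIntegrable; fun_prop
  · apply Continuous.intervalIntegrable; fun_prop

lemma cos_shift (k : ℕ) (t : ℝ) :
    Real.cos (2*π*k*(t + 1/2)) = (-1)^k * Real.cos (2*π*k*t) := by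
  have h : 2*π*k*(t+1/2) = 2*π*k*t + k*π := by ring
  rw [h, Real.cos_add, Real.sin_nat_mul_pi,
      show Real.cos ((k:ℝ)*π) = (-1)^k by simpa using Real.cos_nat_mul_pi_sub 0 k]
  ring

lemma pairing {lam mu : ℝ} {S T : Finset ℕ} (hS : ∀ k ∈ S, 2 ≤ k) (hT : ∀ k ∈ T, 2 ≤ k)
    (hST : ∀ k ∈ S, k ∉ T) {c d : ℕ → ℝ}
    (hphi : ∀ t : ℝ, 0 ≤ 1 + lam * Real.cos (2*π*t) + ∑ k ∈ S, c k * Real.cos (2*π*k*t))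
    (hpsi : ∀ t : ℝ, 0 ≤ 1 + mu * Real.cos (2*π*t) + ∑ k ∈ T, d k * Real.cos (2*π*k*t)) :
    lam * mu ≤ 2 := by
  classical
  set c' : ℕ → ℝ := fun k => if k = 0 then 1 else if k = 1 then lam else c k with hc'
  set d' : ℕ → ℝ := fun k => if k = 0 then 1 else if k = 1 then -mu else (-1)^k * d k with hd'
  set S' : Finset ℕ := insert 0 (insert 1 S) with hS'
  set T' : Finset ℕ := insert 0 (insert 1 T) with hT'
  have h0S : (0:ℕ) ∉ insert 1 S := by
    simp only [Finset.mem_insert]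
    push_neg
    exact ⟨by norm_num, fun h => by have := hS 0 h; omega⟩
  have h1S : (1:ℕ) ∉ S := fun h => by have := hS 1 h; omega
  have h0T : (0:ℕ) ∉ insert 1 T := by
    simp only [Finset.mem_insert]
    push_neg
    exact ⟨by norm_num, fun h => by have := hT 0 h; omega⟩
  have h1T : (1:ℕ) ∉ T := fun h => by have := hT 1 h; omega
  -- φ as a single sum
  have hphi' : ∀ t : ℝ, (∑ k ∈ S', c' k * Real.cos (2*π*k*t))
      = 1 + lam * Real.cos (2*π*t) + ∑ k ∈ S, c k * Real.cos (2*π*k*t) := by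
    intro t
    rw [hS', Finset.sum_insert h0S, Finset.sum_insert h1S]
    have e0 : c' 0 * Real.cos (2*π*(0:ℕ)*t) = 1 := by simp [hc']
    have e1 : c' 1 * Real.cos (2*π*(1:ℕ)*t) = lam * Real.cos (2*π*t) := by
      simp [hc']
    have e2 : ∑ k ∈ S, c' k * Real.cos (2*π*k*t) = ∑ k ∈ S, c k * Real.cos (2*π*k*t) := by
      apply Finset.sum_congr rfl
      intro k hk
      have := hS k hk
      simp only [hc']
      rw [if_neg (by omega), if_neg (by omega)]
    rw [e0, e1, e2]
    ring
  -- ψ shifted as a single sum, nonneg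
  have hpsi' : ∀ t : ℝ, 0 ≤ ∑ k ∈ T', d' k * Real.cos (2*π*k*t) := by
    intro t
    have expand : (∑ k ∈ T', d' k * Real.cos (2*π*k*t))
        = 1 + mu * Real.cos (2*π*(t+1/2)) + ∑ k ∈ T, d k * Real.cos (2*π*k*(t+1/2)) := by
      rw [hT', Finset.sum_insert h0T, Finset.sum_insert h1T]
      have e0 : d' 0 * Real.cos (2*π*(0:ℕ)*t) = 1 := by simp [hd']
      have e1 : d' 1 * Real.cos (2*π*(1:ℕ)*t) = mu * Real.cos (2*π*(t+1/2)) := by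
        have : Real.cos (2*π*(t+1/2)) = - Real.cos (2*π*t) := by
          rw [show 2*π*(t+1/2) = 2*π*t + π by ring, Real.cos_add_pi]
        simp only [hd', this]
        norm_num
      have e2 : ∑ k ∈ T, d' k * Real.cos (2*π*k*t)
          = ∑ k ∈ T, d k * Real.cos (2*π*k*(t+1/2)) := by
        apply Finset.sum_congr rfl
        intro k hk
        have hk2 := hT k hk
        rw [cos_shift]
        simp only [hd']
        rw [if_neg (by omega), if_neg (by omega)]
        ring
      rw [e0, e1, e2]
      ring
    rw [expand]
    exact hpsi (t+1/2)
  -- the integral of the product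
  have cont1 : ∀ (e : ℕ → ℝ) (U : Finset ℕ),
      Continuous (fun t => ∑ k ∈ U, e k * Real.cos (2*π*k*t)) := by
    intro e U
    apply continuous_finset_sum
    intro i _
    fun_prop
  have hIval : ∀ k ∈ S', ∀ m ∈ T',
      (∫ t in (0:ℝ)..1, Real.cos (2*π*k*t) * Real.cos (2*π*m*t))
      = if k = m then (if k = 0 then 1 else 1/2) else 0 := by
    intro k _ m _
    by_cases hkm : k = m
    · subst hkm
      by_cases hk : k = 0
      · subst hk
        simp
      · rw [if_pos rfl, if_neg hk]
        exact int_cos_sq hk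
    · rw [if_neg hkm]
      exact int_cos_mul_cos hkm
  have key : (∫ t in (0:ℝ)..1,
      (∑ k ∈ S', c' k * Real.cos (2*π*k*t)) * (∑ m ∈ T', d' m * Real.cos (2*π*m*t)))
      = 1 - lam*mu/2 := by
    have hprod : (fun t => (∑ k ∈ S', c' k * Real.cos (2*π*k*t)) *
        (∑ m ∈ T', d' m * Real.cos (2*π*m*t)))
        = fun t => ∑ k ∈ S', ∑ m ∈ T',
            (c' k * d' m) * (Real.cos (2*π*k*t) * Real.cos (2*π*m*t)) := by
      funext t
      rw [Finset.sum_mul_sum]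
      apply Finset.sum_congr rfl; intro k _
      apply Finset.sum_congr rfl; intro m _
      ring
    rw [hprod]
    rw [intervalIntegral.integral_finset_sum]
    swap
    · intro k _
      apply Continuous.intervalIntegrable
      apply continuous_finset_sum
      intro m _
      fun_prop
    have inner : ∀ k ∈ S', (∫ t in (0:ℝ)..1, ∑ m ∈ T',
        (c' k * d' m) * (Real.cos (2*π*k*t) * Real.cos (2*π*m*t)))
        = ∑ m ∈ T', (c' k * d' m) *
            (∫ t in (0:ℝ)..1, Real.cos (2*π*k*t) * Real.cos (2*π*m*t)) := by
      intro k _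
      rw [intervalIntegral.integral_finset_sum]
      swap
      · intro m _
        apply Continuous.intervalIntegrable
        fun_prop
      apply Finset.sum_congr rfl
      intro m _
      rw [intervalIntegral.integral_const_mul]
    rw [Finset.sum_congr rfl inner]
    have evalk : ∀ k ∈ S', (∑ m ∈ T', (c' k * d' m) *
        (∫ t in (0:ℝ)..1, Real.cos (2*π*k*t) * Real.cos (2*π*m*t)))
        = if k = 0 then 1 else if k = 1 then -(lam*mu)/2 else 0 := by
      intro k hk
      rw [Finset.sum_congr rfl (fun m hm => by rw [hIval k hk m hm])]
      by_cases hk0 : k = 0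
      · subst hk0
        rw [if_pos rfl]
        rw [Finset.sum_eq_single 0]
        · simp [hc', hd']
        · intro m hm hm0
          rw [if_neg (by omega)]
          ring
        · intro h
          exact absurd (by simp [hT'] : (0:ℕ) ∈ T') h
      · by_cases hk1 : k = 1
        · subst hk1
          rw [if_neg (by norm_num), if_pos rfl]
          rw [Finset.sum_eq_single 1]
          · simp only [hc', hd']
            norm_num
            ring
          · intro m hm hm1
            rw [if_neg (fun h => hm1 h.symm)]
            ring
          · intro h
            exact absurd (by simp [hT'] : (1:ℕ) ∈ T') h
        · rw [show (if k = 0 then (1:ℝ) else if k = 1 then -(lam*mu)/2 else 0) = 0 by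
            rw [if_neg hk0, if_neg hk1]]
          apply Finset.sum_eq_zero
          intro m hm
          have hkS : k ∈ S := by
            rw [hS'] at hk
            simp only [Finset.mem_insert] at hk
            rcases hk with h|h|h
            · exact absurd h hk0
            · exact absurd h hk1
            · exact h
          have : k ≠ m := by
            rw [hT'] at hm
            simp only [Finset.mem_insert] at hm
            have := hS k hkS
            rcases hm with h|h|h
            · omega
            · omega
            · exact fun he => hST k hkS (he ▸ h)
          rw [if_neg this]
          ring
    rw [Finset.sum_congr rfl evalk]
    rw [hS', Finset.sum_insert h0S, Finset.sum_insert h1S]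
    rw [if_pos rfl, if_neg (by norm_num), if_pos rfl]
    rw [Finset.sum_eq_zero (fun k hk => by
      have := hS k hk
      rw [if_neg (by omega), if_neg (by omega)])]
    ring
  -- nonnegativity of the integral
  have hnn : 0 ≤ (∫ t in (0:ℝ)..1,
      (∑ k ∈ S', c' k * Real.cos (2*π*k*t)) * (∑ m ∈ T', d' m * Real.cos (2*π*m*t))) := by
    apply intervalIntegral.integral_nonneg (by norm_num)
    intro t _
    apply mul_nonneg
    · rw [hphi']
      exact hphi t
    · exact hpsi' t
  rw [key] at hnn
  linarith

lemma fejer_identity (n : ℕ) (y : ℝ) :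
    (∑ j ∈ Finset.range n, Real.cos (j*y))^2 + (∑ j ∈ Finset.range n, Real.sin (j*y))^2
    = n + ∑ k ∈ Finset.range n, 2*((n:ℝ)-((k:ℝ)+1))*Real.cos (((k:ℝ)+1)*y) := by
  induction n with
  | zero => simp
  | succ n ih =>
    have reflect : ∑ j ∈ Finset.range n, Real.cos ((n:ℝ)*y - (j:ℝ)*y)
        = ∑ k ∈ Finset.range n, Real.cos (((k:ℝ)+1)*y) := by
      rw [← Finset.sum_range_reflect (fun k => Real.cos (((k:ℝ)+1)*y)) n]
      apply Finset.sum_congr rfl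
      intro j hj
      have hj' : j < n := Finset.mem_range.mp hj
      have hcast : ((n - 1 - j : ℕ) : ℝ) + 1 = (n:ℝ) - j := by
        have h1 : (n - 1 - j : ℕ) = n - (j+1) := by omega
        rw [h1, Nat.cast_sub (by omega)]
        push_cast
        ring
      rw [hcast]
      congr 1
      ring
    have cross : (∑ j ∈ Finset.range n, Real.cos (j*y)) * Real.cos (n*y)
        + (∑ j ∈ Finset.range n, Real.sin (j*y)) * Real.sin (n*y)
        = ∑ k ∈ Finset.range n, Real.cos (((k:ℝ)+1)*y) := by
      rw [← reflect, Finset.sum_mul, Finset.sum_mul, ← Finset.sum_add_distrib]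
      apply Finset.sum_congr rfl
      intro j _
      rw [Real.cos_sub]
      ring
    have sumid : ∑ k ∈ Finset.range n, 2*(((n:ℝ)+1)-((k:ℝ)+1))*Real.cos (((k:ℝ)+1)*y)
        = (∑ k ∈ Finset.range n, 2*((n:ℝ)-((k:ℝ)+1))*Real.cos (((k:ℝ)+1)*y))
          + 2 * ∑ k ∈ Finset.range n, Real.cos (((k:ℝ)+1)*y) := by
      rw [Finset.mul_sum, ← Finset.sum_add_distrib]
      apply Finset.sum_congr rfl
      intro k _
      ring
    have pyth := Real.sin_sq_add_cos_sq ((n:ℝ)*y)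
    rw [Finset.sum_range_succ, Finset.sum_range_succ, Finset.sum_range_succ]
    push_cast
    push_cast at ih sumid
    nlinarith [ih, cross, sumid, pyth]

lemma kernel_nonneg {n : ℕ} (hn : 0 < n) (θ x : ℝ) :
    0 ≤ 1 + ∑ k ∈ Finset.range n,
      (2*((n:ℝ)-((k:ℝ)+1))/n) * (Real.cos (((k:ℝ)+1)*(2*π*θ)) * Real.cos (((k:ℝ)+1)*(2*π*x))) := by
  have hn' : (0:ℝ) < n := by exact_mod_cast hn
  have h1 := fejer_identity n (2*π*(x-θ))
  have h2 := fejer_identity n (2*π*(x+θ))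
  have s1 : (0:ℝ) ≤ (n:ℝ) + ∑ k ∈ Finset.range n, 2*((n:ℝ)-((k:ℝ)+1))*Real.cos (((k:ℝ)+1)*(2*π*(x-θ))) := by
    rw [← h1]; positivity
  have s2 : (0:ℝ) ≤ (n:ℝ) + ∑ k ∈ Finset.range n, 2*((n:ℝ)-((k:ℝ)+1))*Real.cos (((k:ℝ)+1)*(2*π*(x+θ))) := by
    rw [← h2]; positivity
  have comb : (∑ k ∈ Finset.range n, 2*((n:ℝ)-((k:ℝ)+1))*Real.cos (((k:ℝ)+1)*(2*π*(x-θ))))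
      + (∑ k ∈ Finset.range n, 2*((n:ℝ)-((k:ℝ)+1))*Real.cos (((k:ℝ)+1)*(2*π*(x+θ))))
      = ∑ k ∈ Finset.range n, 4*((n:ℝ)-((k:ℝ)+1)) *
          (Real.cos (((k:ℝ)+1)*(2*π*θ)) * Real.cos (((k:ℝ)+1)*(2*π*x))) := by
    rw [← Finset.sum_add_distrib]
    apply Finset.sum_congr rfl
    intro k _
    rw [show ((k:ℝ)+1)*(2*π*(x-θ)) = (((k:ℝ)+1)*(2*π*x)) - (((k:ℝ)+1)*(2*π*θ)) by ring,
        show ((k:ℝ)+1)*(2*π*(x+θ)) = (((k:ℝ)+1)*(2*π*x)) + (((k:ℝ)+1)*(2*π*θ)) by ring,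
        Real.cos_sub, Real.cos_add]
    ring
  have e1 : (2*(n:ℝ)) * (1 + ∑ k ∈ Finset.range n,
      (2*((n:ℝ)-((k:ℝ)+1))/n) * (Real.cos (((k:ℝ)+1)*(2*π*θ)) * Real.cos (((k:ℝ)+1)*(2*π*x))))
      = 2*(n:ℝ) + ∑ k ∈ Finset.range n, 4*((n:ℝ)-((k:ℝ)+1)) *
          (Real.cos (((k:ℝ)+1)*(2*π*θ)) * Real.cos (((k:ℝ)+1)*(2*π*x))) := by
    rw [mul_add, mul_one, Finset.mul_sum]
    congr 1
    apply Finset.sum_congr rfl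
    intro k _
    field_simp
    ring
  have e2 : (2*(n:ℝ)) * (1 + ∑ k ∈ Finset.range n,
      (2*((n:ℝ)-((k:ℝ)+1))/n) * (Real.cos (((k:ℝ)+1)*(2*π*θ)) * Real.cos (((k:ℝ)+1)*(2*π*x))))
      = ((n:ℝ) + ∑ k ∈ Finset.range n, 2*((n:ℝ)-((k:ℝ)+1))*Real.cos (((k:ℝ)+1)*(2*π*(x-θ))))
      + ((n:ℝ) + ∑ k ∈ Finset.range n, 2*((n:ℝ)-((k:ℝ)+1))*Real.cos (((k:ℝ)+1)*(2*π*(x+θ)))) := by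
    rw [e1, ← comb]
    ring
  have h2n : (0:ℝ) < 2*n := by positivity
  have h3 := add_nonneg s1 s2
  rw [← e2] at h3
  exact le_of_mul_le_mul_left (by linarith [h3]) h2n

noncomputable def turanSet (H : Set ℕ) : Set ℝ :=
  {lam : ℝ | ∃ S : Finset ℕ, ↑S ⊆ H ∧ ∃ c : ℕ → ℝ,
    ∀ t : ℝ, 0 ≤ 1 + lam * Real.cos (2 * π * t) +
      ∑ k ∈ S, c k * Real.cos (2 * π * k * t)}

lemma hard_step (H : Set ℕ) {lam : ℝ} (hlam1 : 1 ≤ lam)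
    (hnotmem : lam ∉ turanSet H) (N : ℕ) :
    ∃ mu : ℝ, mu ∈ turanSet ({k : ℕ | 2 ≤ k} \ H) ∧ 2*((N:ℝ)+1)/(((N:ℝ)+2)*lam) ≤ mu := by
  classical
  have hlam0 : (0:ℝ) < lam := by linarith
  -- the evaluation map
  set P : (Fin (N+2) → ℝ) → ℝ → ℝ :=
    fun a x => ∑ k : Fin (N+2), a k * Real.cos (2*π*(k:ℕ)*x) with hP
  have hPadd : ∀ (a b : Fin (N+2) → ℝ) (x : ℝ), P (a+b) x = P a x + P b x := by
    intro a b x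
    simp only [hP, Pi.add_apply, add_mul]
    rw [Finset.sum_add_distrib]
  have hPsmul : ∀ (c : ℝ) (a : Fin (N+2) → ℝ) (x : ℝ), P (c • a) x = c * P a x := by
    intro c a x
    simp only [hP, Pi.smul_apply, smul_eq_mul, Finset.mul_sum]
    apply Finset.sum_congr rfl
    intro k _
    ring
  have hPsingle : ∀ (j : Fin (N+2)) (v : ℝ) (x : ℝ),
      P (Pi.single j v) x = v * Real.cos (2*π*(j:ℕ)*x) := by
    intro j v x
    simp only [hP]
    rw [Finset.sum_eq_single j]
    · rw [Pi.single_eq_same]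
    · intro b _ hbj
      rw [Pi.single_eq_of_ne hbj, zero_mul]
    · intro h
      exact absurd (Finset.mem_univ j) h
  have hPabs : ∀ (a : Fin (N+2) → ℝ) (x : ℝ), |P a x| ≤ (N+2) * ‖a‖ := by
    intro a x
    calc |P a x| ≤ ∑ k : Fin (N+2), |a k * Real.cos (2*π*(k:ℕ)*x)| :=
          Finset.abs_sum_le_sum_abs _ _
      _ ≤ ∑ k : Fin (N+2), ‖a‖ := by
          apply Finset.sum_le_sum
          intro k _
          rw [abs_mul]
          calc |a k| * |Real.cos (2*π*(k:ℕ)*x)| ≤ |a k| * 1 := by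
                apply mul_le_mul_of_nonneg_left (Real.abs_cos_le_one _) (abs_nonneg _)
            _ = |a k| := mul_one _
            _ ≤ ‖a‖ := norm_le_pi_norm a k
      _ = (N+2) * ‖a‖ := by
          rw [Finset.sum_const, Finset.card_univ, Fintype.card_fin]
          push_cast
          ring
  -- the cone of nonnegative cosine polynomials
  set K : Set (Fin (N+2) → ℝ) := {a | ∀ x : ℝ, 0 ≤ P a x} with hK
  have hKconv : Convex ℝ K := by
    intro a ha b hb sa sb hsa hsb hsab
    intro x
    rw [hPadd, hPsmul, hPsmul]
    exact add_nonneg (mul_nonneg hsa (ha x)) (mul_nonneg hsb (hb x))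
  have h0K : (0 : Fin (N+2) → ℝ) ∈ K := by
    intro x
    have : (0 : Fin (N+2) → ℝ) = (0:ℝ) • (0 : Fin (N+2) → ℝ) := by simp
    rw [this, hPsmul]
    simp
  have hi0K : Pi.single (0 : Fin (N+2)) (1:ℝ) ∈ K := by
    intro x
    rw [hPsingle]
    simp
  have hi0 : Pi.single (0 : Fin (N+2)) (1:ℝ) ∈ interior K := by
    rw [mem_interior]
    refine ⟨Metric.ball (Pi.single 0 1) (1/(N+2)), ?_, Metric.isOpen_ball,
      Metric.mem_ball_self (by positivity)⟩
    intro a ha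
    intro x
    have hdist : ‖a - Pi.single 0 1‖ < 1/(N+2) := by
      rw [← dist_eq_norm]
      exact Metric.mem_ball.mp ha
    have h1 : P a x = 1 + P (a - Pi.single 0 1) x := by
      have : a = Pi.single 0 1 + (a - Pi.single 0 1) := by ring
      rw [show P a x = P (Pi.single 0 1 + (a - Pi.single 0 1)) x by rw [← this],
        hPadd, hPsingle]
      simp
    rw [h1]
    have h2 := (abs_le.mp (hPabs (a - Pi.single 0 1) x)).1
    have h3 : ((N:ℝ)+2) * ‖a - Pi.single 0 1‖ < ((N:ℝ)+2) * (1/(N+2)) := by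
      apply mul_lt_mul_of_pos_left hdist (by positivity)
    have h4 : ((N:ℝ)+2) * (1/((N:ℝ)+2)) = 1 := by field_simp
    nlinarith [h2, h3]
  -- the affine feasibility set
  set B : Set (Fin (N+2) → ℝ) :=
    {b | b 0 = 1 ∧ b 1 = lam ∧ ∀ k : Fin (N+2), 2 ≤ (k:ℕ) → (k:ℕ) ∉ H → b k = 0} with hB
  have hBconv : Convex ℝ B := by
    intro a ha b hb sa sb hsa hsb hsab
    refine ⟨?_, ?_, ?_⟩
    · simp only [Pi.add_apply, Pi.smul_apply, smul_eq_mul, ha.1, hb.1]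
      linarith
    · simp only [Pi.add_apply, Pi.smul_apply, smul_eq_mul, ha.2.1, hb.2.1]
      rw [← add_mul, hsab, one_mul]
    · intro k h2 hk
      simp only [Pi.add_apply, Pi.smul_apply, smul_eq_mul, ha.2.2 k h2 hk, hb.2.2 k h2 hk]
      ring
  have hzero_ne_one : (0 : Fin (N+2)) ≠ 1 := by
    simp [Fin.ext_iff]
  set base : Fin (N+2) → ℝ := (Pi.single 0 1 : Fin (N+2) → ℝ) + lam • (Pi.single 1 1 : Fin (N+2) → ℝ) with hbasedef
  have hbase : base ∈ B := by
    refine ⟨?_, ?_, ?_⟩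
    · simp [hbasedef, Pi.single_eq_same, Pi.single_eq_of_ne hzero_ne_one]
    · simp [hbasedef, Pi.single_eq_same, Pi.single_eq_of_ne hzero_ne_one.symm]
    · intro k h2 hk
      have hk0 : k ≠ 0 := by
        intro h; subst h; simp at h2
      have hk1 : k ≠ 1 := by
        intro h; subst h; rw [Fin.val_one] at h2; omega
      simp [hbasedef, Pi.single_eq_of_ne hk0, Pi.single_eq_of_ne hk1]
  -- disjointness
  have hdisj : Disjoint (interior K) B := by
    rw [Set.disjoint_left]
    intro b hbi hbB
    apply hnotmem
    have hbK : b ∈ K := interior_subset hbi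
    refine ⟨(Finset.range (N+2)).filter (fun k => 2 ≤ k ∧ k ∈ H), ?_,
      (fun k => if h : k < N+2 then b ⟨k, h⟩ else 0), ?_⟩
    · intro k hk
      simp only [Finset.coe_filter, Finset.mem_range, Set.mem_setOf_eq] at hk
      exact hk.2.2
    · intro t
      have h0 := hbK t
      have step1 : P b t = ∑ k ∈ Finset.range (N+2),
          (if h : k < N+2 then b ⟨k, h⟩ else 0) * Real.cos (2*π*(k:ℕ)*t) := by
        simp only [hP]
        rw [← Fin.sum_univ_eq_sum_range
          (fun k => (if h : k < N+2 then b ⟨k, h⟩ else 0) * Real.cos (2*π*(k:ℕ)*t))]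
        apply Finset.sum_congr rfl
        intro i _
        congr 1
        rw [dif_pos i.isLt]
      have step2 : ∑ k ∈ (Finset.range (N+2)).filter (fun k => ¬(2 ≤ k ∧ k ∈ H)),
          (if h : k < N+2 then b ⟨k, h⟩ else 0) * Real.cos (2*π*(k:ℕ)*t)
          = 1 + lam * Real.cos (2*π*t) := by
        have hsub : ({0,1} : Finset ℕ) ⊆ (Finset.range (N+2)).filter
            (fun k => ¬(2 ≤ k ∧ k ∈ H)) := by
          intro x hx
          simp only [Finset.mem_insert, Finset.mem_singleton] at hx
          rcases hx with h|h <;> subst h <;>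
            simp only [Finset.mem_filter, Finset.mem_range] <;>
            exact ⟨by omega, by omega⟩
        rw [← Finset.sum_subset hsub ?_]
        · rw [Finset.sum_pair (by norm_num : (0:ℕ) ≠ 1)]
          have e0 : (⟨0, by omega⟩ : Fin (N+2)) = 0 := by
            apply Fin.ext; simp
          have e1 : (⟨1, by omega⟩ : Fin (N+2)) = 1 := by
            apply Fin.ext; simp [Fin.val_one]
          rw [dif_pos (by omega : (0:ℕ) < N+2), dif_pos (by omega : (1:ℕ) < N+2)]
          rw [e0, e1, hbB.1, hbB.2.1]
          push_cast
          norm_num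
        · intro x hx hxn
          simp only [Finset.mem_filter, Finset.mem_range] at hx
          simp only [Finset.mem_insert, Finset.mem_singleton] at hxn
          push_neg at hxn
          have hx2 : 2 ≤ x := by omega
          have hxH : x ∉ H := fun hmem => hx.2 ⟨hx2, hmem⟩
          rw [dif_pos hx.1, hbB.2.2 ⟨x, hx.1⟩ hx2 hxH, zero_mul]
      rw [step1, ← Finset.sum_filter_add_sum_filter_not (Finset.range (N+2))
        (fun k => 2 ≤ k ∧ k ∈ H), step2] at h0
      convert h0 using 1
      ring
  -- separation
  obtain ⟨f, s, hfA, hfB⟩ :=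
    geometric_hahn_banach_open (hKconv.interior) isOpen_interior hBconv hdisj
  have hfK : ∀ a ∈ K, f a ≤ s := by
    intro a ha
    have seq : ∀ m : ℕ,
        f ((1/((m:ℝ)+1)) • (Pi.single 0 1 : Fin (N+2) → ℝ) + (1 - 1/((m:ℝ)+1)) • a) < s := by
      intro m
      apply hfA
      apply hKconv.combo_interior_closure_mem_interior hi0 (subset_closure ha)
      · positivity
      · have : 1/((m:ℝ)+1) ≤ 1 := by
          rw [div_le_one (by positivity)]
          linarith
        linarith
      · ring
    have tends : Filter.Tendsto
        (fun m : ℕ => f ((1/((m:ℝ)+1)) • (Pi.single 0 1 : Fin (N+2) → ℝ)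
          + (1 - 1/((m:ℝ)+1)) • a))
        Filter.atTop (nhds (f a)) := by
      have h1 : Filter.Tendsto (fun m : ℕ => 1/((m:ℝ)+1)) Filter.atTop (nhds 0) :=
        tendsto_one_div_add_atTop_nhds_zero_nat
      have h2 : Filter.Tendsto
          (fun m : ℕ => (1/((m:ℝ)+1)) • (Pi.single 0 1 : Fin (N+2) → ℝ)
            + (1 - 1/((m:ℝ)+1)) • a)
          Filter.atTop (nhds ((0:ℝ) • (Pi.single 0 1 : Fin (N+2) → ℝ) + ((1:ℝ) - 0) • a)) :=
        (h1.smul_const _).add ((tendsto_const_nhds.sub h1).smul_const _)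
      simp only [zero_smul, sub_zero, one_smul, zero_add] at h2
      exact (f.continuous.tendsto a).comp h2
    exact le_of_tendsto tends (Filter.Eventually.of_forall (fun m => (seq m).le))
  have hs0 : 0 ≤ s := by
    have := hfK 0 h0K
    rwa [map_zero] at this
  have hfKneg : ∀ a ∈ K, f a ≤ 0 := by
    intro a ha
    by_contra hpos
    push_neg at hpos
    have hmem : ((s+1)/f a) • a ∈ K := by
      intro x
      rw [hPsmul]
      exact mul_nonneg (by positivity) (ha x)
    have h2 := hfK _ hmem
    rw [map_smul, smul_eq_mul, div_mul_cancel₀ _ (ne_of_gt hpos)] at h2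
    linarith
  -- dual vector
  set tv : Fin (N+2) → ℝ := fun k => -f (Pi.single k 1) with htv
  have hrepr : ∀ a : Fin (N+2) → ℝ, f a = -∑ k : Fin (N+2), tv k * a k := by
    intro a
    have hsum : a = ∑ k : Fin (N+2), a k • (Pi.single k 1 : Fin (N+2) → ℝ) := by
      funext j
      rw [Finset.sum_apply, Finset.sum_eq_single j]
      · simp
      · intro b _ hbj
        simp [Pi.single_eq_of_ne (Ne.symm hbj)]
      · intro h
        exact absurd (Finset.mem_univ j) h
    calc f a = f (∑ k : Fin (N+2), a k • (Pi.single k 1 : Fin (N+2) → ℝ)) := by rw [← hsum]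
      _ = ∑ k : Fin (N+2), a k * f (Pi.single k 1) := by
          rw [map_sum]
          exact Finset.sum_congr rfl (fun k _ => by rw [map_smul, smul_eq_mul])
      _ = -∑ k : Fin (N+2), tv k * a k := by
          rw [← Finset.sum_neg_distrib]
          exact Finset.sum_congr rfl (fun k _ => by simp only [htv]; ring)
  have hdualpos : ∀ a ∈ K, 0 ≤ ∑ k : Fin (N+2), tv k * a k := by
    intro a ha
    have := hfKneg a ha
    rw [hrepr] at this
    linarith
  have hsingle_sum : ∀ (j : Fin (N+2)) (v : ℝ),
      ∑ k : Fin (N+2), tv k * (Pi.single j v : Fin (N+2) → ℝ) k = tv j * v := by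
    intro j v
    rw [Finset.sum_eq_single j]
    · rw [Pi.single_eq_same]
    · intro b _ hbj
      rw [Pi.single_eq_of_ne hbj, mul_zero]
    · intro h
      exact absurd (Finset.mem_univ j) h
  have hPe0 : ∀ x : ℝ, P (Pi.single 0 1 : Fin (N+2) → ℝ) x = 1 := by
    intro x
    rw [hPsingle]
    norm_num
  have ht0 : 0 ≤ tv 0 := by
    have := hdualpos _ hi0K
    rwa [hsingle_sum, mul_one] at this
  have htk : ∀ j : Fin (N+2), |tv j| ≤ tv 0 := by
    intro j
    by_cases hj : j = 0
    · subst hj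
      rw [abs_of_nonneg ht0]
    · have sum_two : ∀ v : ℝ,
          ∑ k : Fin (N+2), tv k * ((Pi.single 0 1 : Fin (N+2) → ℝ)
            + (Pi.single j v : Fin (N+2) → ℝ)) k = tv 0 + tv j * v := by
        intro v
        have hterm : ∀ k : Fin (N+2),
            tv k * ((Pi.single 0 1 : Fin (N+2) → ℝ) + (Pi.single j v : Fin (N+2) → ℝ)) k
            = tv k * (Pi.single 0 1 : Fin (N+2) → ℝ) k
              + tv k * (Pi.single j v : Fin (N+2) → ℝ) k := by
          intro k
          rw [Pi.add_apply, mul_add]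
        rw [Finset.sum_congr rfl (fun k _ => hterm k), Finset.sum_add_distrib,
          hsingle_sum, hsingle_sum, mul_one]
      have hplus : (Pi.single 0 1 : Fin (N+2) → ℝ) + (Pi.single j 1 : Fin (N+2) → ℝ) ∈ K := by
        intro x
        rw [hPadd, hPe0, hPsingle, one_mul]
        have := Real.neg_one_le_cos (2*π*((j:ℕ):ℝ)*x)
        linarith
      have hminus : (Pi.single 0 1 : Fin (N+2) → ℝ) + (Pi.single j (-1) : Fin (N+2) → ℝ) ∈ K := by
        intro x
        rw [hPadd, hPe0, hPsingle]
        have := Real.cos_le_one (2*π*((j:ℕ):ℝ)*x)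
        linarith
      have h1 := hdualpos _ hplus
      have h2 := hdualpos _ hminus
      rw [sum_two] at h1 h2
      rw [abs_le]
      constructor <;> nlinarith
  have hzeroH : ∀ k : Fin (N+2), 2 ≤ (k:ℕ) → (k:ℕ) ∈ H → tv k = 0 := by
    intro k h2 hkH
    have hne : tv k = 0 ↔ f (Pi.single k 1) = 0 := by
      simp only [htv]
      constructor <;> intro h <;> linarith
    rw [hne]
    by_contra hfne
    have hk0 : k ≠ 0 := fun h => by subst h; simp at h2
    have hk1 : k ≠ 1 := fun h => by subst h; rw [Fin.val_one] at h2; omega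
    set cc := (s - 1 - f base)/f (Pi.single k 1) with hcc
    have hmemB : base + cc • (Pi.single k 1 : Fin (N+2) → ℝ) ∈ B := by
      refine ⟨?_, ?_, ?_⟩
      · rw [Pi.add_apply, Pi.smul_apply, smul_eq_mul,
          Pi.single_eq_of_ne (Ne.symm hk0), mul_zero, add_zero]
        exact hbase.1
      · rw [Pi.add_apply, Pi.smul_apply, smul_eq_mul,
          Pi.single_eq_of_ne (Ne.symm hk1), mul_zero, add_zero]
        exact hbase.2.1
      · intro j hj2 hjH
        have hjk : j ≠ k := fun h => by subst h; exact hjH hkH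
        rw [Pi.add_apply, Pi.smul_apply, smul_eq_mul,
          Pi.single_eq_of_ne hjk, mul_zero, add_zero]
        exact hbase.2.2 j hj2 hjH
    have hge := hfB _ hmemB
    rw [map_add, map_smul, smul_eq_mul, hcc, div_mul_cancel₀ _ hfne] at hge
    linarith
  have hbasege : s ≤ f base := hfB base hbase
  have hfbase : f base = -(tv 0 + lam * tv 1) := by
    rw [hbasedef, map_add, map_smul, smul_eq_mul]
    simp only [htv]
    ring
  have hlin : tv 0 + lam * tv 1 ≤ 0 := by
    rw [hfbase] at hbasege
    linarith
  have ht0pos : 0 < tv 0 := by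
    rcases lt_or_eq_of_le ht0 with h | h
    · exact h
    · exfalso
      have hallzero : ∀ j, tv j = 0 := by
        intro j
        have h1 := htk j
        rw [← h] at h1
        have h2 := abs_nonneg (tv j)
        have : |tv j| = 0 := le_antisymm h1 h2
        exact abs_eq_zero.mp this
      have hf0 : ∀ a : Fin (N+2) → ℝ, f a = 0 := by
        intro a
        rw [hrepr]
        rw [Finset.sum_eq_zero (fun k _ => by rw [hallzero k, zero_mul])]
        ring
      have h1 := hfA _ hi0
      have h2 := hfB base hbase
      rw [hf0] at h1 h2
      linarith
  -- Fejér weights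
  set w : ℕ → ℝ := fun k => 2*(((N:ℝ)+2)-k)/((N:ℝ)+2) with hw
  have hPker : ∀ θ' x : ℝ,
      P (fun k : Fin (N+2) => if (k:ℕ) = 0 then (1:ℝ) else w (k:ℕ) * Real.cos (2*π*(k:ℕ)*θ')) x
      = 1 + ∑ j ∈ Finset.range (N+1),
          w (j+1) * Real.cos (2*π*((j:ℝ)+1)*θ') * Real.cos (2*π*((j:ℝ)+1)*x) := by
    intro θ' x
    simp only [hP]
    rw [Fin.sum_univ_eq_sum_range (fun j : ℕ =>
      (if j = 0 then (1:ℝ) else w j * Real.cos (2*π*(j:ℝ)*θ')) * Real.cos (2*π*(j:ℝ)*x)) (N+2)]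
    rw [Finset.sum_range_succ']
    have hterms : ∀ j ∈ Finset.range (N+1),
        (if j+1 = 0 then (1:ℝ) else w (j+1) * Real.cos (2*π*((j+1:ℕ):ℝ)*θ'))
          * Real.cos (2*π*((j+1:ℕ):ℝ)*x)
        = w (j+1) * Real.cos (2*π*((j:ℝ)+1)*θ') * Real.cos (2*π*((j:ℝ)+1)*x) := by
      intro j _
      rw [if_neg (Nat.succ_ne_zero j)]
      push_cast
      ring
    rw [Finset.sum_congr rfl hterms, add_comm]
    norm_num
  have hkernelK : ∀ θ' : ℝ,
      (fun k : Fin (N+2) => if (k:ℕ) = 0 then (1:ℝ) else w (k:ℕ) * Real.cos (2*π*(k:ℕ)*θ')) ∈ K := by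
    intro θ' x
    rw [hPker θ' x]
    have hker := kernel_nonneg (n := N+2) (by omega) θ' x
    have hcongr : ∑ k ∈ Finset.range (N+2),
        (2*((((N+2):ℕ):ℝ)-((k:ℝ)+1))/(((N+2):ℕ):ℝ))
          * (Real.cos (((k:ℝ)+1)*(2*π*θ')) * Real.cos (((k:ℝ)+1)*(2*π*x)))
        = ∑ k ∈ Finset.range (N+2),
            w (k+1) * Real.cos (2*π*((k:ℝ)+1)*θ') * Real.cos (2*π*((k:ℝ)+1)*x) := by
      apply Finset.sum_congr rfl
      intro k _
      rw [show 2*π*((k:ℝ)+1)*θ' = ((k:ℝ)+1)*(2*π*θ') by ring,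
        show 2*π*((k:ℝ)+1)*x = ((k:ℝ)+1)*(2*π*x) by ring]
      simp only [hw]
      push_cast
      ring
    rw [hcongr] at hker
    rw [Finset.sum_range_succ] at hker
    have hwz : w (N+1+1) = 0 := by
      simp only [hw]
      push_cast
      ring_nf
    rw [hwz, zero_mul, zero_mul] at hker
    linarith [hker]
  -- final assembly
  set T : Finset ℕ := (Finset.range (N+2)).filter (fun k => 2 ≤ k ∧ k ∉ H) with hT
  set tvn : ℕ → ℝ := fun k => if h : k < N+2 then tv ⟨k,h⟩ else 0 with htvn
  set mu : ℝ := -(w 1 * tv 1)/tv 0 with hmu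
  set e : ℕ → ℝ := fun k => (-1)^k * w k * tvn k / tv 0 with he
  have hw1 : w 1 = 2*((N:ℝ)+1)/((N:ℝ)+2) := by
    simp only [hw]
    push_cast
    ring_nf
  have hDval : ∀ θ : ℝ,
      (∑ k : Fin (N+2), tv k * (fun k : Fin (N+2) =>
        if (k:ℕ) = 0 then (1:ℝ) else w (k:ℕ) * Real.cos (2*π*(k:ℕ)*(θ+1/2))) k)
      = tv 0 + tv 1 * (w 1 * Real.cos (2*π*(θ+1/2)))
        + ∑ k ∈ T, tvn k * (w k * Real.cos (2*π*(k:ℝ)*(θ+1/2))) := by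
    intro θ
    have hconv : ∀ i : Fin (N+2), tv i * (fun k : Fin (N+2) =>
        if (k:ℕ) = 0 then (1:ℝ) else w (k:ℕ) * Real.cos (2*π*(k:ℕ)*(θ+1/2))) i
        = (fun k : ℕ => tvn k *
            (if k = 0 then (1:ℝ) else w k * Real.cos (2*π*(k:ℝ)*(θ+1/2)))) (i:ℕ) := by
      intro i
      simp only [htvn]
      rw [dif_pos i.isLt]
    rw [Finset.sum_congr rfl (fun i _ => hconv i)]
    rw [Fin.sum_univ_eq_sum_range (fun k : ℕ => tvn k *
      (if k = 0 then (1:ℝ) else w k * Real.cos (2*π*(k:ℝ)*(θ+1/2)))) (N+2)]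
    rw [← Finset.sum_filter_add_sum_filter_not (Finset.range (N+2)) (fun k => 2 ≤ k)]
    have hsmall : (Finset.range (N+2)).filter (fun k => ¬(2 ≤ k)) = {0, 1} := by
      apply Finset.ext
      intro k
      simp only [Finset.mem_filter, Finset.mem_range, Finset.mem_insert, Finset.mem_singleton]
      omega
    have hsplit2 : ((Finset.range (N+2)).filter (fun k => 2 ≤ k)).filter (fun k => k ∈ H) ∪
        ((Finset.range (N+2)).filter (fun k => 2 ≤ k)).filter (fun k => k ∉ H)
        = (Finset.range (N+2)).filter (fun k => 2 ≤ k) :=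
      Finset.filter_union_filter_not_eq _ _
    rw [← Finset.sum_filter_add_sum_filter_not
      ((Finset.range (N+2)).filter (fun k => 2 ≤ k)) (fun k => k ∈ H)]
    have hzero1 : ∑ k ∈ ((Finset.range (N+2)).filter (fun k => 2 ≤ k)).filter (fun k => k ∈ H),
        tvn k * (if k = 0 then (1:ℝ) else w k * Real.cos (2*π*(k:ℝ)*(θ+1/2))) = 0 := by
      apply Finset.sum_eq_zero
      intro k hk
      simp only [Finset.mem_filter, Finset.mem_range] at hk
      have : tvn k = 0 := by
        simp only [htvn]
        rw [dif_pos hk.1.1]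
        exact hzeroH ⟨k, hk.1.1⟩ hk.1.2 hk.2
      rw [this, zero_mul]
    have hTeq : ((Finset.range (N+2)).filter (fun k => 2 ≤ k)).filter (fun k => k ∉ H) = T := by
      rw [Finset.filter_filter]
    have hTsum : ∑ k ∈ ((Finset.range (N+2)).filter (fun k => 2 ≤ k)).filter (fun k => k ∉ H),
        tvn k * (if k = 0 then (1:ℝ) else w k * Real.cos (2*π*(k:ℝ)*(θ+1/2)))
        = ∑ k ∈ T, tvn k * (w k * Real.cos (2*π*(k:ℝ)*(θ+1/2))) := by
      rw [hTeq]
      apply Finset.sum_congr rfl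
      intro k hk
      simp only [hT, Finset.mem_filter] at hk
      rw [if_neg (by omega)]
    rw [hzero1, hTsum, hsmall]
    rw [Finset.sum_pair (by norm_num : (0:ℕ) ≠ 1)]
    have e0 : tvn 0 * (if (0:ℕ) = 0 then (1:ℝ)
        else w 0 * Real.cos (2*π*((0:ℕ):ℝ)*(θ+1/2))) = tv 0 := by
      rw [if_pos rfl, mul_one]
      simp only [htvn]
      rw [dif_pos (by omega : (0:ℕ) < N+2)]
      exact congrArg tv (Fin.ext (by simp))
    have e1 : tvn 1 * (if (1:ℕ) = 0 then (1:ℝ)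
        else w 1 * Real.cos (2*π*((1:ℕ):ℝ)*(θ+1/2))) = tv 1 * (w 1 * Real.cos (2*π*(θ+1/2))) := by
      rw [if_neg (by norm_num)]
      have h11 : tvn 1 = tv 1 := by
        simp only [htvn]
        rw [dif_pos (by omega : (1:ℕ) < N+2)]
        exact congrArg tv (Fin.ext (by simp [Fin.val_one]))
      rw [h11]
      norm_num
    rw [e0, e1]
    ring
  have hpsi : ∀ θ : ℝ, 0 ≤ 1 + mu * Real.cos (2*π*θ) +
      ∑ k ∈ T, e k * Real.cos (2*π*(k:ℝ)*θ) := by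
    intro θ
    have hD := hdualpos _ (hkernelK (θ+1/2))
    rw [hDval θ] at hD
    have hfinal : 1 + mu * Real.cos (2*π*θ) + ∑ k ∈ T, e k * Real.cos (2*π*(k:ℝ)*θ)
        = (tv 0 + tv 1 * (w 1 * Real.cos (2*π*(θ+1/2)))
          + ∑ k ∈ T, tvn k * (w k * Real.cos (2*π*(k:ℝ)*(θ+1/2))))/tv 0 := by
      rw [add_div, add_div, Finset.sum_div]
      congr 1
      congr 1
      · rw [div_self (ne_of_gt ht0pos)]
      · rw [show 2*π*(θ+1/2) = 2*π*θ + π by ring, Real.cos_add_pi]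
        simp only [hmu]
        ring
      · apply Finset.sum_congr rfl
        intro k hk
        rw [cos_shift k θ]
        simp only [he]
        ring
    rw [hfinal]
    exact div_nonneg hD ht0pos.le
  refine ⟨mu, ⟨T, ?_, e, hpsi⟩, ?_⟩
  · intro k hk
    simp only [hT, Finset.coe_filter, Finset.mem_range, Set.mem_setOf_eq] at hk
    exact ⟨hk.2.1, hk.2.2⟩
  · rw [hmu, hw1]
    rw [div_le_div_iff₀ (by positivity) ht0pos]
    have hNp : (0:ℝ) ≤ 2*((N:ℝ)+1) := by positivity
    have hN2 : ((N:ℝ)+2) ≠ 0 := by positivity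
    calc 2*((N:ℝ)+1)*tv 0 ≤ 2*((N:ℝ)+1)*(-(lam*tv 1)) := by nlinarith [hlin, hNp]
      _ = -(2*((N:ℝ)+1)/((N:ℝ)+2)*tv 1)*(((N:ℝ)+2)*lam) := by
          field_simp

lemma turanM_eq (H : Set ℕ) : turanM H = sSup (turanSet H) := rfl

lemma one_mem_turanSet (H : Set ℕ) : (1:ℝ) ∈ turanSet H := by
  refine ⟨∅, by simp, 0, ?_⟩
  intro t
  simp only [Finset.sum_empty, add_zero, one_mul]
  linarith [Real.neg_one_le_cos (2*π*t)]

lemma turanSet_le_two {H : Set ℕ} (hH : H ⊆ {k : ℕ | 2 ≤ k}) :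
    ∀ lam ∈ turanSet H, lam ≤ 2 := by
  rintro lam ⟨S, hS, c, hphi⟩
  have := pairing (mu := 1) (T := ∅) (d := 0)
    (fun k hk => hH (hS hk)) (by simp) (by simp) hphi (by
      intro t
      simp only [Finset.sum_empty, add_zero, one_mul]
      linarith [Real.neg_one_le_cos (2*π*t)])
  linarith

/-- Duality: `M(H) · M(ℕ≥2 \ H) = 2` for any `H ⊆ {2,3,…}`. -/
theorem turanM_duality (H : Set ℕ) (hH : H ⊆ {k : ℕ | 2 ≤ k}) :
    turanM H * turanM ({k : ℕ | 2 ≤ k} \ H) = 2 := by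
  classical
  set Hc : Set ℕ := {k : ℕ | 2 ≤ k} \ H with hHc
  have hHc2 : Hc ⊆ {k : ℕ | 2 ≤ k} := Set.diff_subset
  rw [turanM_eq, turanM_eq]
  set A := turanSet H with hA
  set A' := turanSet Hc with hA'
  have hbddA : BddAbove A := ⟨2, fun lam h => turanSet_le_two hH lam h⟩
  have hbddA' : BddAbove A' := ⟨2, fun lam h => turanSet_le_two hHc2 lam h⟩
  have hneA : A.Nonempty := ⟨1, one_mem_turanSet H⟩
  have hneA' : A'.Nonempty := ⟨1, one_mem_turanSet Hc⟩
  have hMA1 : 1 ≤ sSup A := le_csSup hbddA (one_mem_turanSet H)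
  have hMA'1 : 1 ≤ sSup A' := le_csSup hbddA' (one_mem_turanSet Hc)
  have hpair : ∀ lam ∈ A, ∀ mu ∈ A', lam * mu ≤ 2 := by
    rintro lam ⟨S, hS, c, hphi⟩ mu ⟨T, hT, d, hpsi⟩
    refine pairing (fun k hk => hH (hS hk)) (fun k hk => (hT hk).1) ?_ hphi hpsi
    intro k hk hkT
    exact (hT hkT).2 (hS hk)
  have hub : sSup A * sSup A' ≤ 2 := by
    have h1 : ∀ lam ∈ A, lam * sSup A' ≤ 2 := by
      intro lam hlam
      rcases le_or_gt lam 0 with h | h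
      · nlinarith [hMA'1]
      · have h2 : sSup A' ≤ 2/lam :=
          csSup_le hneA' (fun mu hmu => (le_div_iff₀ h).mpr (by
            have := hpair lam hlam mu hmu
            linarith [this, mul_comm mu lam]))
        calc lam * sSup A' ≤ lam * (2/lam) := mul_le_mul_of_nonneg_left h2 h.le
          _ = 2 := by field_simp
    have hA'pos : 0 < sSup A' := by linarith
    have h3 : sSup A ≤ 2 / sSup A' :=
      csSup_le hneA (fun lam hlam => (le_div_iff₀ hA'pos).mpr (h1 lam hlam))
    calc sSup A * sSup A' ≤ (2/ sSup A') * sSup A' :=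
          mul_le_mul_of_nonneg_right h3 (by linarith)
      _ = 2 := by field_simp
  have hlb : 2 ≤ sSup A * sSup A' := by
    by_contra hcon
    push_neg at hcon
    have hMApos : 0 < sSup A := by linarith
    have hA'pos : 0 < sSup A' := by linarith
    have hlt : sSup A < 2 / sSup A' := by
      rw [lt_div_iff₀ hA'pos]
      exact hcon
    set lam := (sSup A + 2/ sSup A')/2 with hlamdef
    have hl1 : sSup A < lam := by
      rw [hlamdef]
      linarith
    have hl2 : lam < 2/ sSup A' := by
      rw [hlamdef]
      linarith
    have hlam1 : 1 ≤ lam := by linarith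
    have hlampos : 0 < lam := by linarith
    have hnotmem : lam ∉ A := fun hmem => absurd (le_csSup hbddA hmem) (not_le.mpr hl1)
    have hstep : ∀ N : ℕ, 2*((N:ℝ)+1)/(((N:ℝ)+2)*lam) ≤ sSup A' := by
      intro N
      obtain ⟨mu, hmu, hmub⟩ := hard_step H hlam1 hnotmem N
      exact le_trans hmub (le_csSup hbddA' hmu)
    have hlim : 2/lam ≤ sSup A' := by
      by_contra hc2
      push_neg at hc2
      set δ := 2/lam - sSup A' with hδdef
      have hδpos : 0 < δ := by
        rw [hδdef]
        linarith
      obtain ⟨N, hN⟩ := exists_nat_gt (2/(lam*δ))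
      have hkey := hstep N
      have hgap : 2/lam - 2*((N:ℝ)+1)/(((N:ℝ)+2)*lam) = 2/(((N:ℝ)+2)*lam) := by
        field_simp
        ring
      have hsmall : 2/(((N:ℝ)+2)*lam) < δ := by
        rw [div_lt_iff₀ (by positivity)]
        rw [div_lt_iff₀ (by positivity)] at hN
        nlinarith [hN, hδpos, hlampos]
      have : sSup A' ≥ 2/lam - 2/(((N:ℝ)+2)*lam) := by linarith [hkey, hgap]
      rw [hδdef] at hsmall
      linarith
    have hcontr : sSup A' < 2/lam := by
      rw [lt_div_iff₀ hlampos]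
      rw [lt_div_iff₀ hA'pos] at hl2
      nlinarith [hl2]
    linarith
  linarith
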